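/- arXiv:2509.09980 — 4 statements merged into one kernel-verified Lean document; each statement's English description precedes it below -/
import Mathlib

section
/- Let k be a field and let Z_n be the n×n Hankel matrix of indeterminates with (i,j) entry z_{i+j−1}, n ≥ 1. Then the permanent of Z_n is an irreducible polynomial in k[z₁,…,z_{2n−1}]; equivalently, k[z₁,…,z_{2n−1}]/(perm(Z_n)) is an integral domain. -/
open MvPolynomial

/-- The `n × n` Hankel matrix of indeterminates in the `2n - 1` variables `z₁, …, z_{2n-1}`
(the variable with index `l : Fin (2n-1)` stands for `z_{l+1}`): the `(i,j)` entry
(`0`-indexed) is `z_{i+j+1}`. -/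
noncomputable def hankelMatrixF (k : Type*) [Field k] (n : ℕ) :
    Matrix (Fin n) (Fin n) (MvPolynomial (Fin (2 * n - 1)) k) :=
  fun i j => X ⟨i.val + j.val, by have := i.isLt; have := j.isLt; omega⟩

namespace Stmt6Aux

variable {k : Type*} [Field k]

noncomputable def Hk (k : Type*) [Field k] (n s : ℕ) : Matrix (Fin n) (Fin n) (MvPolynomial ℕ k) :=
  fun i j => X (s + i + j)

noncomputable def Pk (k : Type*) [Field k] (n s : ℕ) : MvPolynomial ℕ k := (Hk k n s).permanent

noncomputable def Psi (k : Type*) [Field k] (t : ℕ) :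
    MvPolynomial ℕ k ≃ₐ[k] Polynomial (MvPolynomial {x : ℕ // x ≠ t} k) :=
  (renameEquiv k (Equiv.optionSubtypeNe t).symm).trans (optionEquivLeft k {x : ℕ // x ≠ t})

noncomputable def th (k : Type*) [Field k] (t : ℕ) :
    MvPolynomial {x : ℕ // x ≠ t} k →ₐ[k] MvPolynomial ℕ k := rename Subtype.val

noncomputable def bfun (k : Type*) [Field k] (t : ℕ) (a : ℕ) : MvPolynomial {x : ℕ // x ≠ t} k :=
  if h : a = t then 1 else X ⟨a, h⟩

lemma th_X (t : ℕ) (v : {x : ℕ // x ≠ t}) : th k t (X v) = X (v : ℕ) := by simp [th]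

lemma Psi_X (t v : ℕ) : Psi k t (X v) =
    if h : v = t then Polynomial.X else Polynomial.C (X ⟨v, h⟩) := by
  rw [Psi]
  simp only [AlgEquiv.trans_apply, renameEquiv_apply, rename_X]
  split
  · subst ‹v = t›; rw [Equiv.optionSubtypeNe_symm_self, optionEquivLeft_X_none]
  · rw [Equiv.optionSubtypeNe_symm_of_ne ‹v ≠ t›, optionEquivLeft_X_some]

lemma Psi_symm_C (t : ℕ) (c : MvPolynomial {x : ℕ // x ≠ t} k) :
    (Psi k t).symm (Polynomial.C c) = th k t c := by
  have h : ((Psi k t).symm.toAlgHom.comp (Polynomial.CAlgHom) :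
      MvPolynomial {x : ℕ // x ≠ t} k →ₐ[k] MvPolynomial ℕ k) = th k t := by
    apply algHom_ext
    intro v
    simp only [AlgHom.coe_comp, Function.comp_apply, Polynomial.CAlgHom_apply,
      AlgEquiv.toAlgHom_eq_coe, AlgHom.coe_coe, th, rename_X]
    apply (Psi k t).injective
    show (Psi k t) ((Psi k t).symm (Polynomial.C (X v))) = _
    rw [AlgEquiv.apply_symm_apply, Psi_X, dif_neg v.2]
  calc (Psi k t).symm (Polynomial.C c)
      = ((Psi k t).symm.toAlgHom.comp (Polynomial.CAlgHom)) c := rfl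
  _ = th k t c := by rw [h]

lemma Psi_symm_X (t : ℕ) : ((Psi k t).symm Polynomial.X : MvPolynomial ℕ k) = X t := by
  apply (Psi k t).injective
  rw [AlgEquiv.apply_symm_apply, Psi_X, dif_pos rfl]

noncomputable def retr (k : Type*) [Field k] (t : ℕ) :
    MvPolynomial ℕ k →ₐ[k] MvPolynomial {x : ℕ // x ≠ t} k :=
  rename (fun v => if h : v = t then ⟨t + 1, by omega⟩ else ⟨v, h⟩)

lemma retr_th (t : ℕ) (w : MvPolynomial {x : ℕ // x ≠ t} k) : retr k t (th k t w) = w := by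
  rw [th, retr]
  show (rename _) ((rename _) w) = w
  rw [rename_rename]
  have h : ((fun v => if h : v = t then (⟨t + 1, by omega⟩ : {x : ℕ // x ≠ t}) else ⟨v, h⟩) ∘
      (Subtype.val : {x : ℕ // x ≠ t} → ℕ)) = id := by
    funext x
    simp only [Function.comp_apply, id_eq, dif_neg x.2]
  rw [h, rename_id, AlgHom.id_apply]

lemma pullback_irreducible {A B : Type*} [CommRing A] [CommRing B] (φ : A →+* B) (ψ : B →+* A)
    (h : ∀ x, ψ (φ x) = x) {p : A} (hp : Irreducible (φ p)) : Irreducible p := by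
  constructor
  · intro hu; exact hp.not_isUnit (hu.map φ)
  · intro a b hab
    rcases hp.isUnit_or_isUnit (by rw [hab, map_mul]) with hu | hu
    · left; simpa [h] using hu.map ψ
    · right; simpa [h] using hu.map ψ

lemma Psi_Pk (t n s : ℕ) : Psi k t (Pk k n s) =
    ∑ σ : Equiv.Perm (Fin n),
      Polynomial.X ^ (Finset.univ.filter fun i => s + ↑(σ i) + ↑i = t).card *
        Polynomial.C (∏ i, bfun k t (s + σ i + i)) := by
  rw [Pk, Matrix.permanent, map_sum]
  refine Finset.sum_congr rfl fun σ _ => ?_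
  rw [map_prod]
  have h1 : ∀ i : Fin n, Psi k t (Hk k n s (σ i) i)
      = (if s + ↑(σ i) + ↑i = t then
          (Polynomial.X : Polynomial (MvPolynomial {x : ℕ // x ≠ t} k)) else 1)
        * Polynomial.C (bfun k t (s + σ i + i)) := by
    intro i
    rw [Hk, Psi_X, bfun]
    split
    · simp
    · simp
  rw [Finset.prod_congr rfl fun i _ => h1 i, Finset.prod_mul_distrib]
  congr 1
  · rw [Finset.prod_ite, Finset.prod_const, Finset.prod_const, one_pow, mul_one]
  · rw [map_prod]

lemma coeff_Psi_Pk (t n s m : ℕ) : (Psi k t (Pk k n s)).coeff m =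
    ∑ σ : Equiv.Perm (Fin n),
      if (Finset.univ.filter fun i => s + ↑(σ i) + ↑i = t).card = m
      then ∏ i, bfun k t (s + σ i + i) else 0 := by
  rw [Psi_Pk, Polynomial.finset_sum_coeff]
  refine Finset.sum_congr rfl fun σ _ => ?_
  rw [mul_comm, Polynomial.C_mul_X_pow_eq_monomial, Polynomial.coeff_monomial]

lemma Psi_lt (t n s : ℕ) (h : t < s) :
    ∃ W, Psi k t (Pk k n s) = Polynomial.C W ∧ th k t W = Pk k n s := by
  refine ⟨∑ σ : Equiv.Perm (Fin n), ∏ i, bfun k t (s + σ i + i), ?_, ?_⟩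
  · rw [Psi_Pk, map_sum]
    refine Finset.sum_congr rfl fun σ _ => ?_
    have h0 : (Finset.univ.filter fun i : Fin n => s + ↑(σ i) + ↑i = t) = ∅ := by
      ext i; simp only [Finset.mem_filter, Finset.mem_univ, true_and, Finset.notMem_empty,
        iff_false]
      omega
    rw [h0]; simp
  · rw [map_sum, Pk, Matrix.permanent]
    refine Finset.sum_congr rfl fun σ _ => ?_
    rw [map_prod]
    refine Finset.prod_congr rfl fun i _ => ?_
    rw [bfun, dif_neg (by omega), Hk]
    simp [th]

lemma degree_le (n s : ℕ) : (Psi k s (Pk k n s)).degree ≤ 1 := by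
  rw [Psi_Pk]
  refine (Polynomial.degree_sum_le _ _).trans ?_
  refine (Finset.sup_le fun σ _ => ?_)
  refine (Polynomial.degree_mul_le _ _).trans ?_
  have h1 : (Finset.univ.filter fun i : Fin n => s + ↑(σ i) + ↑i = s).card ≤ 1 := by
    refine Finset.card_le_one.mpr fun a ha b hb => ?_
    simp only [Finset.mem_filter, Finset.mem_univ, true_and] at ha hb
    exact Fin.ext (by omega)
  rw [Polynomial.degree_X_pow]
  refine le_trans (add_le_add le_rfl Polynomial.degree_C_le) ?_
  rw [add_zero]
  exact_mod_cast h1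
lemma coeff_one (m s : ℕ) : th k s ((Psi k s (Pk k (m+1) s)).coeff 1) = Pk k m (s+2) := by
  rw [coeff_Psi_Pk]
  rw [← Equiv.sum_comp (Equiv.Perm.decomposeFin).symm]
  rw [Fintype.sum_prod_type]
  have hcond : ∀ (p : Fin (m+1)) (e : Equiv.Perm (Fin m)),
      ((Finset.univ.filter fun i : Fin (m+1) =>
        s + ↑((Equiv.Perm.decomposeFin.symm (p, e)) i) + ↑i = s).card = 1) ↔ p = 0 := by
    intro p e
    have hset : (Finset.univ.filter fun i : Fin (m+1) =>
        s + ↑((Equiv.Perm.decomposeFin.symm (p, e)) i) + ↑i = s)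
        = if p = 0 then {0} else ∅ := by
      ext i
      simp only [Finset.mem_filter, Finset.mem_univ, true_and]
      constructor
      · intro h
        have hi0 : (i : ℕ) = 0 := by omega
        have hi : i = 0 := Fin.ext (by simp [hi0])
        subst hi
        rw [Equiv.Perm.decomposeFin_symm_apply_zero] at h
        have hp0 : (p : ℕ) = 0 := by omega
        have : p = 0 := Fin.ext (by simp [hp0])
        simp [this]
      · intro h
        by_cases hp : p = 0
        · rw [if_pos hp] at h
          rw [Finset.mem_singleton] at h
          subst h; subst hp
          simp
        · rw [if_neg hp] at h
          exact absurd h (Finset.notMem_empty _)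
    rw [hset]
    by_cases hp : p = 0 <;> simp [hp]
  have hsum : ∀ p : Fin (m+1), ∑ e : Equiv.Perm (Fin m),
      (if (Finset.univ.filter fun i : Fin (m+1) =>
        s + ↑((Equiv.Perm.decomposeFin.symm (p, e)) i) + ↑i = s).card = 1
      then ∏ i, bfun k s (s + ↑((Equiv.Perm.decomposeFin.symm (p, e)) i) + ↑i) else 0)
      = if p = 0 then (∑ e : Equiv.Perm (Fin m),
          ∏ i, bfun k s (s + ↑((Equiv.Perm.decomposeFin.symm (p, e)) i) + ↑i)) else 0 := by
    intro p
    by_cases hp : p = 0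
    · simp only [hp, if_true]
      refine Finset.sum_congr rfl fun e _ => ?_
      rw [if_pos ((hcond 0 e).mpr rfl)]
    · simp only [hp, if_false]
      refine Finset.sum_eq_zero fun e _ => ?_
      rw [if_neg (fun hc => hp ((hcond p e).mp hc))]
  rw [Finset.sum_congr rfl fun p _ => hsum p]
  rw [Finset.sum_ite_eq' Finset.univ (0 : Fin (m+1))]
  rw [if_pos (Finset.mem_univ _)]
  rw [map_sum, Pk, Matrix.permanent]
  refine Finset.sum_congr rfl fun e _ => ?_
  rw [map_prod, Fin.prod_univ_succ]
  have h0 : bfun k s (s + ↑((Equiv.Perm.decomposeFin.symm ((0 : Fin (m+1)), e)) 0) + ↑(0 : Fin (m+1))) = 1 := by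
    rw [Equiv.Perm.decomposeFin_symm_apply_zero, bfun, dif_pos (by simp)]
  rw [h0, map_one, one_mul]
  refine Finset.prod_congr rfl fun j _ => ?_
  have hτ : (Equiv.Perm.decomposeFin.symm ((0 : Fin (m+1)), e)) j.succ = (e j).succ := by
    rw [Equiv.Perm.decomposeFin_symm_apply_succ, Equiv.swap_self]
    rfl
  rw [hτ, bfun, dif_neg (by simp [Fin.val_succ]; omega)]
  rw [th_X]
  show X (s + ↑(e j).succ + ↑j.succ) = Hk k m (s+2) (e j) j
  rw [Hk]
  exact congrArg X (by simp [Fin.val_succ]; omega)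

lemma coeff_two (m s : ℕ) :
    th k (s+1) ((Psi k (s+1) (Pk k (m+2) s)).coeff 2) = Pk k m (s+4) := by
  classical
  set D2 := (Equiv.Perm.decomposeFin (n := m+1)).symm with hD2
  set D1 := (Equiv.Perm.decomposeFin (n := m)).symm with hD1
  -- membership characterization
  have hmem : ∀ (p : Fin (m+2)) (q : Fin (m+1)) (f : Equiv.Perm (Fin m)) (i : Fin (m+2)),
      (s + ↑((D2 (p, D1 (q, f))) i) + ↑i = s + 1) ↔
        ((i = 0 ∧ p = 1) ∨ (i = 1 ∧ (q : ℕ) + 1 = (p : ℕ))) := by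
    intro p q f i
    refine Fin.cases ?_ (fun j => ?_) i
    · simp only [hD2, Equiv.Perm.decomposeFin_symm_apply_zero, Fin.val_zero, add_zero]
      have v1 : ((1 : Fin (m+2)) : ℕ) = 1 := Fin.val_one m
      constructor
      · intro h
        refine Or.inl ⟨trivial, Fin.ext ?_⟩
        rw [v1]; omega
      · rintro (⟨-, rfl⟩ | ⟨h01, -⟩)
        · rw [v1]
        · exact absurd h01 (by simp [Fin.ext_iff])
    · rw [hD2, Equiv.Perm.decomposeFin_symm_apply_succ]
      constructor
      · intro h
        have hj : (j : ℕ) = 0 ∧ (((Equiv.swap 0 p) ((D1 (q, f)) j).succ : Fin (m+2)) : ℕ) = 0 := by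
          rw [Fin.val_succ] at h; omega
        have hj0 : j = 0 := Fin.ext (by simp [hj.1, Fin.val_zero])
        subst hj0
        have hs0 : (Equiv.swap 0 p) ((D1 (q, f)) 0).succ = 0 := Fin.ext (by simp [hj.2, Fin.val_zero])
        rw [hD1, Equiv.Perm.decomposeFin_symm_apply_zero] at hs0
        have hqp : q.succ = p := by
          have := (Equiv.swap 0 p).injective (a₁ := q.succ) (a₂ := p)
          apply this
          rw [hs0, Equiv.swap_apply_right]
        right
        constructor
        · exact Fin.ext (by simp [Fin.val_succ, Fin.val_zero, Fin.val_one])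
        · rw [← hqp, Fin.val_succ]
      · rintro (⟨h0, -⟩ | ⟨h1, hqp⟩)
        · exact absurd h0 (Fin.succ_ne_zero j)
        · have hj0 : j = 0 := by
            have : (j.succ : ℕ) = 1 := by rw [h1, Fin.val_one]
            exact Fin.ext (by rw [Fin.val_succ] at this; rw [Fin.val_zero]; omega)
          subst hj0
          have hqp' : q.succ = p := Fin.ext (by rw [Fin.val_succ, hqp])
          rw [hD1, Equiv.Perm.decomposeFin_symm_apply_zero, ← hqp', Equiv.swap_apply_right]
          simp [Fin.val_succ, Fin.val_one]
  -- card characterization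
  have hcard : ∀ (p : Fin (m+2)) (q : Fin (m+1)) (f : Equiv.Perm (Fin m)),
      ((Finset.univ.filter fun i : Fin (m+2) =>
        s + ↑((D2 (p, D1 (q, f))) i) + ↑i = s + 1).card = 2) ↔ (p = 1 ∧ q = 0) := by
    intro p q f
    set S := (Finset.univ.filter fun i : Fin (m+2) =>
        s + ↑((D2 (p, D1 (q, f))) i) + ↑i = s + 1) with hS
    have hmemS : ∀ i, i ∈ S ↔ ((i = 0 ∧ p = 1) ∨ (i = 1 ∧ (q : ℕ) + 1 = (p : ℕ))) := by
      intro i; rw [hS, Finset.mem_filter]; simp only [Finset.mem_univ, true_and]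
      exact hmem p q f i
    have h01 : (0 : Fin (m+2)) ≠ 1 := by simp [Fin.ext_iff]
    constructor
    · intro hc
      have hsub : S ⊆ {0, 1} := by
        intro i hi
        rcases (hmemS i).mp hi with ⟨rfl, -⟩ | ⟨rfl, -⟩
        · exact Finset.mem_insert_self _ _
        · exact Finset.mem_insert_of_mem (Finset.mem_singleton_self _)
      have hcard01 : ({0, 1} : Finset (Fin (m+2))).card = 2 := by
        rw [Finset.card_insert_of_notMem (by simp [h01]), Finset.card_singleton]
      have hSeq : S = {0, 1} := Finset.eq_of_subset_of_card_le hsub (by omega)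
      have h0S : (0 : Fin (m+2)) ∈ S := by rw [hSeq]; exact Finset.mem_insert_self _ _
      have h1S : (1 : Fin (m+2)) ∈ S := by
        rw [hSeq]; exact Finset.mem_insert_of_mem (Finset.mem_singleton_self _)
      have hp : p = 1 := by
        rcases (hmemS 0).mp h0S with ⟨-, hp⟩ | ⟨h, -⟩
        · exact hp
        · exact absurd h h01
      refine ⟨hp, ?_⟩
      rcases (hmemS 1).mp h1S with ⟨h, -⟩ | ⟨-, hq⟩
      · exact absurd h.symm h01
      · subst hp
        have v1 : ((1 : Fin (m+2)) : ℕ) = 1 := Fin.val_one m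
        rw [v1] at hq
        exact Fin.ext (by simp only [Fin.val_zero]; omega)
    · rintro ⟨rfl, rfl⟩
      have hSeq : S = {0, 1} := by
        ext i
        rw [hmemS i]
        simp only [Finset.mem_insert, Finset.mem_singleton]
        constructor
        · rintro (⟨rfl, -⟩ | ⟨rfl, -⟩)
          · exact Or.inl rfl
          · exact Or.inr rfl
        · rintro (rfl | rfl)
          · exact Or.inl ⟨by trivial, by trivial⟩
          · exact Or.inr ⟨by trivial, by simp [Fin.val_zero, Fin.val_one]⟩
      rw [hSeq, Finset.card_insert_of_notMem (by simp [h01]), Finset.card_singleton]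
  -- now compute
  rw [coeff_Psi_Pk]
  rw [← Equiv.sum_comp D2]
  rw [Fintype.sum_prod_type]
  have hinner : ∀ p : Fin (m+2),
      (∑ e : Equiv.Perm (Fin (m+1)), if (Finset.univ.filter fun i : Fin (m+2) =>
          s + ↑((D2 (p, e)) i) + ↑i = s + 1).card = 2
        then ∏ i, bfun k (s+1) (s + ↑((D2 (p, e)) i) + ↑i) else 0)
      = ∑ q : Fin (m+1), ∑ f : Equiv.Perm (Fin m),
          if (Finset.univ.filter fun i : Fin (m+2) =>
            s + ↑((D2 (p, D1 (q, f))) i) + ↑i = s + 1).card = 2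
          then ∏ i, bfun k (s+1) (s + ↑((D2 (p, D1 (q, f))) i) + ↑i) else 0 := by
    intro p
    rw [← Equiv.sum_comp D1 (fun e => if (Finset.univ.filter fun i : Fin (m+2) =>
          s + ↑((D2 (p, e)) i) + ↑i = s + 1).card = 2
        then ∏ i, bfun k (s+1) (s + ↑((D2 (p, e)) i) + ↑i) else 0)]
    rw [Fintype.sum_prod_type]
  rw [Finset.sum_congr rfl fun p _ => hinner p]
  have hstep : ∀ (p : Fin (m+2)) (q : Fin (m+1)),
      (∑ f : Equiv.Perm (Fin m),
        if (Finset.univ.filter fun i : Fin (m+2) =>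
          s + ↑((D2 (p, D1 (q, f))) i) + ↑i = s + 1).card = 2
        then ∏ i, bfun k (s+1) (s + ↑((D2 (p, D1 (q, f))) i) + ↑i) else 0)
      = if q = 0 then (if p = 1 then
          ∑ f : Equiv.Perm (Fin m), ∏ i, bfun k (s+1) (s + ↑((D2 (p, D1 (q, f))) i) + ↑i)
          else 0) else 0 := by
    intro p q
    by_cases hp : p = 1 <;> by_cases hq : q = 0
    · subst hp; subst hq
      simp only [if_true]
      refine Finset.sum_congr rfl fun f _ => ?_
      rw [if_pos ((hcard 1 0 f).mpr ⟨rfl, rfl⟩)]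
    · rw [if_neg hq]
      refine Finset.sum_eq_zero fun f _ => ?_
      rw [if_neg (fun hc => hq ((hcard p q f).mp hc).2)]
    · rw [if_pos hq, if_neg hp]
      refine Finset.sum_eq_zero fun f _ => ?_
      rw [if_neg (fun hc => hp ((hcard p q f).mp hc).1)]
    · rw [if_neg hq]
      refine Finset.sum_eq_zero fun f _ => ?_
      rw [if_neg (fun hc => hq ((hcard p q f).mp hc).2)]
  rw [Finset.sum_congr rfl fun p _ => Finset.sum_congr rfl fun q _ => hstep p q]
  rw [Finset.sum_congr rfl fun p _ => Finset.sum_ite_eq' Finset.univ (0 : Fin (m+1)) _]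
  simp only [Finset.mem_univ, if_true]
  rw [Finset.sum_eq_single (1 : Fin (m+2)) (fun p _ hp => if_neg hp)
    (fun h => absurd (Finset.mem_univ _) h)]
  rw [if_pos rfl]
  -- final computation
  rw [map_sum, Pk, Matrix.permanent]
  refine Finset.sum_congr rfl fun f _ => ?_
  rw [map_prod, Fin.prod_univ_succ, Fin.prod_univ_succ]
  have h0 : bfun k (s+1) (s + ↑((D2 (1, D1 (0, f))) 0) + ↑(0 : Fin (m+2))) = 1 := by
    rw [hD2, Equiv.Perm.decomposeFin_symm_apply_zero, bfun,
      dif_pos (by simp [Fin.val_one])]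
  have h1 : bfun k (s+1) (s + ↑((D2 (1, D1 (0, f))) (0 : Fin (m+1)).succ) + ↑((0 : Fin (m+1)).succ : Fin (m+2))) = 1 := by
    rw [hD2, Equiv.Perm.decomposeFin_symm_apply_succ, hD1,
      Equiv.Perm.decomposeFin_symm_apply_zero]
    have : (Equiv.swap (0 : Fin (m+2)) 1) (0 : Fin (m+1)).succ = 0 := by
      have : ((0 : Fin (m+1)).succ : Fin (m+2)) = 1 := by
        exact Fin.ext (by simp [Fin.val_succ, Fin.val_one])
      rw [this, Equiv.swap_apply_right]
    rw [this, bfun, dif_pos (by simp [Fin.val_succ])]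
  rw [h0, h1]
  simp only [map_one, one_mul]
  refine Finset.prod_congr rfl fun l _ => ?_
  have hτ : (D2 (1, D1 (0, f))) (l.succ.succ) = ((f l).succ.succ : Fin (m+2)) := by
    rw [hD2, Equiv.Perm.decomposeFin_symm_apply_succ, hD1,
      Equiv.Perm.decomposeFin_symm_apply_succ, Equiv.swap_self]
    show (Equiv.swap (0 : Fin (m+2)) 1) ((Equiv.refl _) (f l).succ).succ = _
    rw [Equiv.refl_apply]
    apply Equiv.swap_apply_of_ne_of_ne
    · exact Fin.succ_ne_zero _
    · intro h
      have := congrArg Fin.val h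
      simp [Fin.val_succ, Fin.val_one] at this
  rw [hτ, bfun, dif_neg (by simp [Fin.val_succ]; omega), th_X]
  show X (s + ((f l).succ.succ : Fin (m+2)).val + (l.succ.succ : Fin (m+2)).val) = Hk k m (s+4) (f l) l
  rw [Hk]
  exact congrArg X (by simp [Fin.val_succ]; omega)

lemma Pk_zero (s : ℕ) : Pk k 0 s = 1 := Matrix.permanent_isEmpty

lemma Pk_one (s : ℕ) : Pk k 1 s = X s := by
  rw [Pk, Matrix.permanent_unique]
  rw [Hk]
  exact congrArg X (by simp)

lemma linear_irred {R' : Type*} [CommRing R'] [IsDomain R'] {a b : R'}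
    (ha : Irreducible a) (hnd : ¬ a ∣ b) :
    Irreducible (Polynomial.C a * Polynomial.X + Polynomial.C b) := by
  have hdeg : (Polynomial.C a * Polynomial.X + Polynomial.C b).natDegree = 1 :=
    Polynomial.natDegree_linear ha.ne_zero
  have hne : (Polynomial.C a * Polynomial.X + Polynomial.C b) ≠ 0 := by
    intro h; rw [h, Polynomial.natDegree_zero] at hdeg; exact one_ne_zero hdeg.symm
  have key : ∀ f g : Polynomial R',
      Polynomial.C a * Polynomial.X + Polynomial.C b = f * g → g.natDegree = 0 →
      IsUnit f ∨ IsUnit g := by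
    intro f g hfg hg0
    have hgC : g = Polynomial.C (g.coeff 0) := Polynomial.eq_C_of_natDegree_eq_zero hg0
    set c := g.coeff 0 with hc
    have hcoeff1 : a = f.coeff 1 * c := by
      have := congrArg (fun p => Polynomial.coeff p 1) hfg
      rw [Polynomial.coeff_add, Polynomial.coeff_C_mul, Polynomial.coeff_X_one, mul_one,
        Polynomial.coeff_C] at this
      rw [hgC] at this
      rw [Polynomial.coeff_mul_C] at this
      simpa using this
    rcases ha.isUnit_or_isUnit hcoeff1 with hu | hu
    · -- f.coeff 1 is a unit; then a ∣ c and a ∣ b : contradiction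
      exfalso
      have hac : a ∣ c := by
        refine ⟨↑hu.unit⁻¹, ?_⟩
        have h1 : (↑hu.unit⁻¹ : R') * (f.coeff 1) = 1 := by
          rw [mul_comm]; exact hu.mul_val_inv
        calc c = 1 * c := (one_mul c).symm
        _ = (↑hu.unit⁻¹ * f.coeff 1) * c := by rw [h1]
        _ = ↑hu.unit⁻¹ * (f.coeff 1 * c) := by ring
        _ = ↑hu.unit⁻¹ * a := by rw [← hcoeff1]
        _ = a * ↑hu.unit⁻¹ := by ring
      have hb : b = f.coeff 0 * c := by
        have := congrArg (fun p => Polynomial.coeff p 0) hfg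
        rw [Polynomial.coeff_add, Polynomial.coeff_C_mul, Polynomial.coeff_X_zero, mul_zero,
          Polynomial.coeff_C] at this
        rw [hgC, Polynomial.coeff_mul_C] at this
        simpa using this
      exact hnd (hb ▸ hac.mul_left (f.coeff 0))
    · exact Or.inr (by rw [hgC]; exact hu.map Polynomial.C)
  constructor
  · intro hu
    rw [Polynomial.natDegree_eq_zero_of_isUnit hu] at hdeg
    exact one_ne_zero hdeg.symm
  · intro f g hfg
    have hf : f ≠ 0 := fun h => hne (by rw [hfg, h, zero_mul])
    have hg : g ≠ 0 := fun h => hne (by rw [hfg, h, mul_zero])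
    have hsum : f.natDegree + g.natDegree = 1 := by
      rw [← Polynomial.natDegree_mul hf hg, ← hfg, hdeg]
    rcases Nat.eq_zero_or_pos g.natDegree with hg0 | hgpos
    · exact key f g hfg hg0
    · have hf0 : f.natDegree = 0 := by omega
      exact (key g f (by rw [hfg, mul_comm]) hf0).symm

lemma pullback_irred_Psi (t : ℕ) {p : MvPolynomial ℕ k}
    (hp : Irreducible (Psi k t p)) : Irreducible p :=
  pullback_irreducible (Psi k t).toRingEquiv.toRingHom (Psi k t).symm.toRingEquiv.toRingHom
    (fun x => (Psi k t).symm_apply_apply x) hp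

lemma pullback_irred_th (t : ℕ) {p : MvPolynomial {x : ℕ // x ≠ t} k}
    (hp : Irreducible (th k t p)) : Irreducible p :=
  pullback_irreducible (th k t).toRingHom (retr k t).toRingHom
    (fun x => retr_th t x) hp

lemma X_irred (t : ℕ) : Irreducible (X t : MvPolynomial ℕ k) := by
  refine pullback_irred_Psi t ?_
  have h : Psi k t (X t) = Polynomial.X := by rw [Psi_X, dif_pos rfl]
  rw [h]
  exact Polynomial.prime_X.irreducible

lemma Pk_irred (n : ℕ) : ∀ s, Irreducible (Pk k (n+1) s) := by
  induction n using Nat.strong_induction_on with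
  | _ n IH =>
  intro s
  match n, IH with
  | 0, _ => rw [Pk_one]; exact X_irred s
  | (m+1), IH =>
    -- size m+2
    set L := Psi k s (Pk k (m+2) s) with hLdef
    have hA : th k s (L.coeff 1) = Pk k (m+1) (s+2) := coeff_one (m+1) s
    have hAirr' : Irreducible (Pk k (m+1) (s+2)) := IH m (by omega) (s+2)
    have hAirr : Irreducible (L.coeff 1) :=
      pullback_irred_th s (by rw [hA]; exact hAirr')
    have hL : L = Polynomial.C (L.coeff 1) * Polynomial.X + Polynomial.C (L.coeff 0) :=
      Polynomial.eq_X_add_C_of_degree_le_one (degree_le (m+2) s)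
    have hndvd : ¬ (L.coeff 1 ∣ L.coeff 0) := by
      rintro ⟨w, hw⟩
      set A := Pk k (m+1) (s+2) with hAdef
      set B := th k s (L.coeff 0) with hBdef
      have hdvdAB : A ∣ B := ⟨th k s w, by rw [hBdef, hw, map_mul, hA]⟩
      have hB : B = Pk k (m+2) s - A * X s := by
        have h2 := congrArg (Psi k s).symm hL
        rw [AlgEquiv.symm_apply_apply] at h2
        rw [hLdef] at h2  -- noop maybe
        rw [show (Pk k (m+2) s) = (Psi k s).symm (Polynomial.C (L.coeff 1) * Polynomial.X
            + Polynomial.C (L.coeff 0)) from h2]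
        rw [map_add, map_mul, Psi_symm_C, Psi_symm_C, Psi_symm_X, hA]
        ring
      obtain ⟨A2, hA2C, hA2⟩ := Psi_lt (k := k) (s+1) (m+1) (s+2) (by omega)
      obtain ⟨u, hu⟩ := hdvdAB
      have hXs : Psi k (s+1) (X s : MvPolynomial ℕ k)
          = Polynomial.C (X ⟨s, by omega⟩) := by rw [Psi_X, dif_neg (by omega)]
      have hcoeffB : (Psi k (s+1) B).coeff 2 = (Psi k (s+1) (Pk k (m+2) s)).coeff 2 := by
        rw [hB, map_sub, map_mul, hA2C, hXs, ← Polynomial.C_mul, Polynomial.coeff_sub,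
          Polynomial.coeff_C]
        simp
      have hdvd2 : A2 ∣ (Psi k (s+1) (Pk k (m+2) s)).coeff 2 := by
        rw [← hcoeffB, hu, map_mul, hA2C]
        exact ⟨(Psi k (s+1) u).coeff 2, by rw [Polynomial.coeff_C_mul]⟩
      have hdvdQ : A ∣ Pk k m (s+4) := by
        obtain ⟨w2, hw2⟩ := hdvd2
        exact ⟨th k (s+1) w2, by rw [← coeff_two m s, hw2, map_mul, hA2]⟩
      cases m with
      | zero =>
        rw [Pk_zero] at hdvdQ
        exact hAirr'.not_isUnit (isUnit_of_dvd_one hdvdQ)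
      | succ m' =>
        have hQirr : Irreducible (Pk k (m'+1) (s+4)) := IH m' (by omega) (s+4)
        have hQne : Pk k (m'+1) (s+4) ≠ 0 := hQirr.ne_zero
        obtain ⟨r, hr⟩ := hdvdQ
        obtain ⟨Q2, hQ2C, hQ2⟩ := Psi_lt (k := k) (s+2) (m'+1) (s+4) (by omega)
        have hc1 : th k (s+2) ((Psi k (s+2) (Pk k (m'+1+1) (s+2))).coeff 1)
            = Pk k (m'+1) (s+2+2) := coeff_one (m'+1) (s+2)
        have hA1ne : (Psi k (s+2) (Pk k (m'+1+1) (s+2))).coeff 1 ≠ 0 := by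
          intro h0
          apply hQne
          have h3 : Pk k (m'+1) (s+2+2) = 0 := by rw [← hc1, h0, map_zero]
          convert h3 using 2
        have h1le : 1 ≤ (Psi k (s+2) A).natDegree := by
          rw [hAdef]
          exact Polynomial.le_natDegree_of_ne_zero hA1ne
        have heq : Polynomial.C Q2 = Psi k (s+2) A * Psi k (s+2) r := by
          rw [← hQ2C, hr, map_mul]
        have hCne : (Polynomial.C Q2 : Polynomial (MvPolynomial {x : ℕ // x ≠ s+2} k)) ≠ 0 := by
          rw [← hQ2C]
          intro h0
          exact hQne ((map_eq_zero_iff _ (Psi k (s+2)).injective).mp h0)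
        have hAne : Psi k (s+2) A ≠ 0 := fun h0 => hCne (by rw [heq, h0, zero_mul])
        have hrne : Psi k (s+2) r ≠ 0 := fun h0 => hCne (by rw [heq, h0, mul_zero])
        have := congrArg Polynomial.natDegree heq
        rw [Polynomial.natDegree_C, Polynomial.natDegree_mul hAne hrne] at this
        omega
    refine pullback_irred_Psi s ?_
    show Irreducible L
    rw [hL]
    exact linear_irred hAirr hndvd

end Stmt6Aux

/-- For `n ≥ 1`, the permanent of the `n × n` Hankel matrix is an irreducible polynomial in
`k[z₁, …, z_{2n-1}]`; equivalently, the quotient by the ideal it generates is a domain. -/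
theorem stmt6 {k : Type*} [Field k] (n : ℕ) (hn : 1 ≤ n) :
    Irreducible (hankelMatrixF k n).permanent ∧
      IsDomain (MvPolynomial (Fin (2 * n - 1)) k ⧸
        Ideal.span {(hankelMatrixF k n).permanent}) := by
  have hpos : 0 < 2 * n - 1 := by omega
  have hmap : rename (Fin.val : Fin (2*n-1) → ℕ) (hankelMatrixF k n).permanent
      = Stmt6Aux.Pk k n 0 := by
    rw [Matrix.permanent, Stmt6Aux.Pk, Matrix.permanent, map_sum]
    refine Finset.sum_congr rfl fun σ _ => ?_
    rw [map_prod]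
    refine Finset.prod_congr rfl fun i _ => ?_
    rw [hankelMatrixF, Stmt6Aux.Hk, rename_X]
    exact congrArg X (by simp)
  have hPkirr : Irreducible (Stmt6Aux.Pk k n 0) := by
    obtain ⟨m, rfl⟩ : ∃ m, n = m + 1 := ⟨n - 1, by omega⟩
    exact Stmt6Aux.Pk_irred m 0
  have hirr : Irreducible (hankelMatrixF k n).permanent := by
    refine Stmt6Aux.pullback_irreducible
      (rename (Fin.val : Fin (2*n-1) → ℕ) : MvPolynomial (Fin (2*n-1)) k →ₐ[k] _).toRingHom
      (rename (fun v : ℕ => if h : v < 2*n-1 then (⟨v, h⟩ : Fin (2*n-1)) else ⟨0, hpos⟩) :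
        MvPolynomial ℕ k →ₐ[k] _).toRingHom
      (fun x => ?_) ?_
    · show (rename _) ((rename _) x) = x
      rw [rename_rename]
      have h : ((fun v : ℕ => if h : v < 2*n-1 then (⟨v, h⟩ : Fin (2*n-1)) else ⟨0, hpos⟩) ∘
          (Fin.val : Fin (2*n-1) → ℕ)) = id := by
        funext i
        simp only [Function.comp_apply, id_eq, Fin.is_lt, dif_pos, Fin.eta]
      rw [h, rename_id, AlgHom.id_apply]
    · show Irreducible (rename (Fin.val : Fin (2*n-1) → ℕ) (hankelMatrixF k n).permanent)
      rw [hmap]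
      exact hPkirr
  refine ⟨hirr, ?_⟩
  have hprime : Prime (hankelMatrixF k n).permanent :=
    (UniqueFactorizationMonoid.irreducible_iff_prime).mp hirr
  have hspan : (Ideal.span {(hankelMatrixF k n).permanent}).IsPrime :=
    (Ideal.span_singleton_prime hirr.ne_zero).mpr hprime
  exact (Ideal.Quotient.isDomain_iff_prime _).mpr hspan
end

section
/- Let k be a field, n ≥ 3, and Z_n the n×n Hankel matrix with (i,j) entry z_{i+j−1}. Writing perm(Z_n) = ∑_{i=0}^n a_i z_n^i with a_i ∈ k[z_j : j ≠ n], the constant term a₀ contains the monomial z₁ z_{n+1}^{n−1} with coefficient 1, and a₀ does not lie in P², where P is the prime ideal of k[z_j : j ≠ n] generated by all variables z_j with j ∈ [1,n−1] ∪ [n+2, 2n−1]. -/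
open MvPolynomial Pointwise

/-- The `n × n` Hankel matrix of indeterminates: the variable `X j` stands for `z_j`, and
the `(i,j)` entry (`0`-indexed) is `z_{i+j+1}`. -/
noncomputable def hankelMatrix (k : Type*) [Field k] (n : ℕ) :
    Matrix (Fin n) (Fin n) (MvPolynomial ℕ k) :=
  fun i j => X (i.val + j.val + 1)

/-- The special permutation `0 ↦ 0`, `i ↦ n - i` for `i ≠ 0`. -/
def sig0 (n : ℕ) : Equiv.Perm (Fin n) :=
  Function.Involutive.toPerm
    (fun i => if h : i.val = 0 then i else ⟨n - i.val, by have := i.isLt; omega⟩)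
    (by
      intro i
      by_cases h : i.val = 0
      · simp only [dif_pos h]
      · have hi := i.isLt
        simp only [dif_neg h]
        have h2 : ¬ (n - i.val = 0) := by omega
        simp only [dif_neg h2]
        exact Fin.ext (by simp; omega))

lemma sig0_val {n : ℕ} (i : Fin n) :
    ((sig0 n) i).val = if i.val = 0 then 0 else n - i.val := by
  show ((Function.Involutive.toPerm _ _ : Equiv.Perm (Fin n)) i).val = _
  show ((if h : i.val = 0 then i else ⟨n - i.val, by have := i.isLt; omega⟩ : Fin n)).val = _
  by_cases h : i.val = 0
  · rw [dif_pos h, if_pos h, h]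
  · rw [dif_neg h, if_neg h]

/-- For `n ≥ 3`, the constant term `a₀` of `perm(Z_n)` viewed as a polynomial in `z_n`
(obtained by substituting `z_n = 0`) contains the monomial `z₁ z_{n+1}^{n-1}` with
coefficient `1`, and `a₀ ∉ P²` where `P` is the ideal generated by the variables `z_j`
with `j ∈ [1, n-1] ∪ [n+2, 2n-1]`. -/
theorem stmt8 {k : Type*} [Field k] (n : ℕ) (hn : 3 ≤ n)
    (a₀ : MvPolynomial ℕ k)
    (ha₀ : a₀ = MvPolynomial.aeval
      (fun j => if j = n then 0 else (X j : MvPolynomial ℕ k))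
      (hankelMatrix k n).permanent) :
    MvPolynomial.coeff (Finsupp.single 1 1 + Finsupp.single (n + 1) (n - 1)) a₀ = 1 ∧
      a₀ ∉ (Ideal.span ((fun j => (X j : MvPolynomial ℕ k)) ''
        {j | (1 ≤ j ∧ j ≤ n - 1) ∨ (n + 2 ≤ j ∧ j ≤ 2 * n - 1)})) ^ 2 := by
  haveI : NeZero n := ⟨by omega⟩
  set m : ℕ →₀ ℕ := Finsupp.single 1 1 + Finsupp.single (n + 1) (n - 1) with hmdef
  set φ : ℕ → MvPolynomial ℕ k := fun j => if j = n then 0 else X j with hφ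
  -- values of m
  have hmval : ∀ j : ℕ, m j = (if j = 1 then 1 else 0) + (if j = n + 1 then n - 1 else 0) := by
    intro j
    rw [hmdef, Finsupp.add_apply, Finsupp.single_apply, Finsupp.single_apply]
    congr 1 <;> simp [eq_comm]
  -- rewrite a₀ as a sum over permutations
  have ha : a₀ = ∑ σ : Equiv.Perm (Fin n), ∏ i : Fin n, φ ((σ i).val + i.val + 1) := by
    rw [ha₀, Matrix.permanent, map_sum]
    refine Finset.sum_congr rfl fun σ _ => ?_
    rw [map_prod]
    exact Finset.prod_congr rfl fun i _ => by simp [hankelMatrix, aeval_X]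
  -- the key coefficient computation
  have key : ∀ σ : Equiv.Perm (Fin n),
      coeff m (∏ i : Fin n, φ ((σ i).val + i.val + 1))
        = if σ = sig0 n then 1 else 0 := by
    intro σ
    set e : Fin n → ℕ := fun i => (σ i).val + i.val + 1 with he
    by_cases hσ : σ = sig0 n
    · subst hσ
      rw [if_pos rfl]
      have hev : ∀ i : Fin n, e i = if i.val = 0 then 1 else n + 1 := by
        intro i
        have hi := i.isLt
        rw [he]
        simp only [sig0_val]
        by_cases h : i.val = 0 <;> simp [h]
      have hprod : (∏ i : Fin n, φ (e i)) = ∏ i : Fin n, X (e i) := by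
        refine Finset.prod_congr rfl fun i _ => ?_
        have := hev i
        rw [hφ]
        simp only
        rw [if_neg (by rw [this]; split <;> omega)]
      have hX : ∀ j : ℕ, (X j : MvPolynomial ℕ k) = monomial (Finsupp.single j 1) 1 := fun j => rfl
      rw [hprod]
      have : (∏ i : Fin n, (X (e i) : MvPolynomial ℕ k))
          = monomial (∑ i : Fin n, Finsupp.single (e i) 1) 1 := by
        rw [monomial_sum_one]
        exact Finset.prod_congr rfl fun i _ => (hX (e i)).symm
      rw [this]
      have hsum : (∑ i : Fin n, Finsupp.single (e i) (1 : ℕ)) = m := by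
        have h0 : (0 : Fin n) ∈ Finset.univ := Finset.mem_univ _
        rw [← Finset.add_sum_erase _ _ h0]
        have he0 : e 0 = 1 := by rw [hev]; simp [Fin.val_zero]
        have hrest : ∑ i ∈ Finset.univ.erase (0 : Fin n), Finsupp.single (e i) (1 : ℕ)
            = Finsupp.single (n + 1) (n - 1) := by
          have : ∀ i ∈ Finset.univ.erase (0 : Fin n),
              Finsupp.single (e i) (1 : ℕ) = Finsupp.single (n + 1) 1 := by
            intro i hi
            have hne : i ≠ 0 := Finset.ne_of_mem_erase hi
            have : i.val ≠ 0 := fun h => hne (Fin.ext h)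
            rw [hev, if_neg this]
          rw [Finset.sum_congr rfl this, Finset.sum_const, Finset.card_erase_of_mem h0,
            Finset.card_univ, Fintype.card_fin]
          rw [Finsupp.smul_single, smul_eq_mul, mul_one]
        rw [he0, hrest, hmdef]
      rw [hsum, coeff_monomial, if_pos rfl]
    · rw [if_neg hσ]
      by_cases hzero : ∃ i, e i = n
      · obtain ⟨i, hi⟩ := hzero
        have : (∏ i : Fin n, φ (e i)) = 0 :=
          Finset.prod_eq_zero (Finset.mem_univ i) (by rw [hφ]; simp [hi])
        rw [this, coeff_zero]
      · push_neg at hzero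
        have hprod : (∏ i : Fin n, φ (e i)) = ∏ i : Fin n, X (e i) := by
          refine Finset.prod_congr rfl fun i _ => ?_
          rw [hφ]; simp only; rw [if_neg (hzero i)]
        have hX : ∀ j : ℕ, (X j : MvPolynomial ℕ k) = monomial (Finsupp.single j 1) 1 :=
          fun j => rfl
        have hmon : (∏ i : Fin n, (X (e i) : MvPolynomial ℕ k))
            = monomial (∑ i : Fin n, Finsupp.single (e i) 1) 1 := by
          rw [monomial_sum_one]
          exact Finset.prod_congr rfl fun i _ => (hX (e i)).symm
        rw [hprod, hmon, coeff_monomial]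
        rw [if_neg]
        intro hsum
        -- derive σ = sig0 n, contradiction
        apply hσ
        have happ : ∀ j : ℕ, (∑ i : Fin n, (if e i = j then 1 else 0)) = m j := by
          intro j
          rw [← hsum, Finsupp.finset_sum_apply]
          exact Finset.sum_congr rfl fun i _ => (Finsupp.single_apply).symm
        have hmem : ∀ i : Fin n, e i = 1 ∨ e i = n + 1 := by
          intro i
          by_contra hne
          push_neg at hne
          have h1 : m (e i) = 0 := by
            rw [hmval]
            rw [if_neg hne.1, if_neg hne.2]
          have h2 : (1 : ℕ) ≤ ∑ i' : Fin n, (if e i' = e i then 1 else 0) := by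
            calc (1 : ℕ) = if e i = e i then 1 else 0 := by rw [if_pos rfl]
            _ ≤ _ := Finset.single_le_sum (f := fun i' => if e i' = e i then 1 else 0)
                (fun _ _ => by positivity) (Finset.mem_univ i)
          rw [happ, h1] at h2
          omega
        have hval : ∀ i : Fin n, (σ i).val = if i.val = 0 then 0 else n - i.val := by
          intro i
          have hlt := (σ i).isLt
          have hilt := i.isLt
          rcases hmem i with h | h
          · have : (σ i).val = 0 ∧ i.val = 0 := by rw [he] at h; simp only at h; omega
            rw [if_pos this.2]; exact this.1
          · rw [he] at h; simp only at h
            have hi0 : i.val ≠ 0 := by omega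
            rw [if_neg hi0]; omega
        apply Equiv.ext
        intro i
        apply Fin.ext
        rw [hval i, sig0_val]
  -- Part 1
  have hcoeff : coeff m a₀ = 1 := by
    rw [ha, coeff_sum]
    rw [Finset.sum_congr rfl fun σ _ => key σ]
    rw [Finset.sum_ite_eq' Finset.univ (sig0 n) (fun _ => (1 : k)), if_pos (Finset.mem_univ _)]
  refine ⟨hcoeff, ?_⟩
  -- Part 2
  intro hmemP2
  set S : Set ℕ := {j | (1 ≤ j ∧ j ≤ n - 1) ∨ (n + 2 ≤ j ∧ j ≤ 2 * n - 1)} with hS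
  set G : Set (MvPolynomial ℕ k) := (fun j => (X j : MvPolynomial ℕ k)) '' S with hG
  have hsq : (Ideal.span G) ^ 2 = Ideal.span (G * G) := by
    rw [pow_two]; exact Submodule.span_mul_span _ _ _
  rw [hsq] at hmemP2
  -- m minus single 1 1
  have hmsub : m - Finsupp.single 1 1 = Finsupp.single (n + 1) (n - 1) := by
    rw [hmdef, add_tsub_cancel_left]
  -- any element of span (G*G) has zero coefficient at m
  have hzero : ∀ c : MvPolynomial ℕ k, coeff m (c * a₀) = 0 := by
    refine Submodule.span_induction (p := fun p _ => ∀ c, coeff m (c * p) = 0)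
      ?_ ?_ ?_ ?_ hmemP2
    · rintro x hx c
      rw [Set.mem_mul] at hx
      obtain ⟨x₁, hx₁, x₂, hx₂, rfl⟩ := hx
      rw [hG] at hx₁ hx₂
      obtain ⟨a, ha', rfl⟩ := hx₁
      obtain ⟨b, hb', rfl⟩ := hx₂
      rw [hS] at ha' hb'
      have hb1 : b ≠ n + 1 := by rcases hb' with h | h <;> omega
      have ha1 : a ≠ n + 1 := by rcases ha' with h | h <;> omega
      rw [← mul_assoc, coeff_mul_X']
      split
      · next hbs =>
        have hmb : m b ≠ 0 := Finsupp.mem_support_iff.mp hbs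
        rw [hmval] at hmb
        have hb : b = 1 := by
          by_contra hb
          rw [if_neg hb, if_neg hb1] at hmb
          exact hmb rfl
        subst hb
        rw [hmsub, coeff_mul_X']
        rw [if_neg]
        intro has
        have hma : Finsupp.single (n + 1) (n - 1) a ≠ 0 := Finsupp.mem_support_iff.mp has
        rw [Finsupp.single_apply, if_neg (fun h => ha1 h.symm)] at hma
        exact hma rfl
      · rfl
    · intro c; rw [mul_zero, coeff_zero]
    · intro x y _ _ hx hy c
      rw [mul_add, coeff_add, hx, hy, add_zero]
    · intro r x _ hx c
      rw [smul_eq_mul, ← mul_assoc]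
      exact hx (c * r)
  have := hzero 1
  rw [one_mul, hcoeff] at this
  exact one_ne_zero this
end

section
/- Let k be a field of characteristic p > 2 and Z_n the n×n Hankel matrix with entries z_{i+j−1}. With respect to the lexicographic monomial order with z₁ > z₂ > ⋯ > z_{2n−1}, the leading monomial of perm(Z_n) is ∏_{i=1}^{n} z_{2i−1}, and consequently perm(Z_n)^{p−1} is not contained in the ideal (z₁^p, …, z_{2n−1}^p). In particular, k[z₁,…,z_{2n−1}]/(perm(Z_n)) is F-pure. -/
open MvPolynomial

namespace Stmt10Aux

open Finset

variable {k : Type*} [Field k]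

/-- The exponent vector of the monomial contributed by a permutation `σ` to the permanent
of the Hankel matrix. -/
noncomputable def mon (n : ℕ) (σ : Equiv.Perm (Fin n)) : ℕ →₀ ℕ :=
  ∑ i : Fin n, Finsupp.single ((σ i).val + i.val + 1) 1

lemma mon_apply (n : ℕ) (σ : Equiv.Perm (Fin n)) (j : ℕ) :
    mon n σ j = (Finset.univ.filter (fun i : Fin n => (σ i).val + i.val + 1 = j)).card := by
  rw [mon, Finset.card_filter, Finsupp.finset_sum_apply]
  exact Finset.sum_congr rfl fun i _ => Finsupp.single_apply

lemma prod_X {ι : Type*} (s : Finset ι) (e : ι → ℕ) :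
    (∏ i ∈ s, (X (e i) : MvPolynomial ℕ k)) =
      monomial (∑ i ∈ s, Finsupp.single (e i) 1) 1 := by
  classical
  induction s using Finset.induction with
  | empty => simp
  | insert _ _ h ih =>
      rw [Finset.prod_insert h, Finset.sum_insert h, ih, X, monomial_mul, one_mul]

lemma perm_eq (n : ℕ) :
    (hankelMatrix k n).permanent =
      ∑ σ : Equiv.Perm (Fin n), monomial (mon n σ) (1 : k) := by
  unfold Matrix.permanent hankelMatrix
  exact Finset.sum_congr rfl fun σ _ => prod_X _ _

lemma coeff_perm (n : ℕ) (d : ℕ →₀ ℕ) :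
    MvPolynomial.coeff d (hankelMatrix k n).permanent =
      ∑ σ : Equiv.Perm (Fin n), if mon n σ = d then (1 : k) else 0 := by
  rw [perm_eq, MvPolynomial.coeff_sum]
  exact Finset.sum_congr rfl fun σ _ => coeff_monomial _ _ _

lemma mon_lt (n : ℕ) (σ : Equiv.Perm (Fin n)) (hσ : σ ≠ 1) :
    toLex (mon n σ) < toLex (mon n 1) := by
  classical
  set S := Finset.univ.filter (fun i : Fin n => σ i ≠ i) with hSdef
  have hS : S.Nonempty := by
    by_contra h
    rw [Finset.not_nonempty_iff_eq_empty, Finset.filter_eq_empty_iff] at h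
    exact hσ (Equiv.ext fun i => by simpa using h (Finset.mem_univ i))
  set t := S.min' hS with htdef
  have ht : σ t ≠ t := (Finset.mem_filter.mp (S.min'_mem hS)).2
  have hlt : ∀ s : Fin n, s < t → σ s = s := by
    intro s hs
    by_contra h
    exact absurd (S.min'_le s (Finset.mem_filter.mpr ⟨Finset.mem_univ _, h⟩))
      (not_le.mpr hs)
  have hge : ∀ i : Fin n, t ≤ i → t ≤ σ i := by
    intro i hi
    by_contra h
    push_neg at h
    have h1 : σ (σ i) = σ i := hlt (σ i) h
    have h2 : σ i = i := σ.injective h1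
    rw [h2] at h
    exact absurd hi (not_le.mpr h)
  have htσ0 : t < σ t := lt_of_le_of_ne (hge t le_rfl) (Ne.symm ht)
  have htσ' : t.val < (σ t).val := htσ0
  have key : ∀ i : Fin n, (σ i).val + i.val + 1 ≤ 2 * t.val + 1 → i < t := by
    intro i hle
    by_contra h
    push_neg at h
    have h1 : t.val ≤ i.val := h
    have h2 : t.val ≤ (σ i).val := hge i h
    have h3 : i = t := Fin.ext (by omega)
    rw [h3] at hle
    omega
  have ha : ∀ j < 2 * t.val + 1, mon n σ j = mon n 1 j := by
    intro j hj
    rw [mon_apply, mon_apply]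
    congr 1
    ext i
    rw [Finset.mem_filter, Finset.mem_filter]
    simp only [Finset.mem_filter, Finset.mem_univ, true_and, Equiv.Perm.one_apply]
    constructor
    · intro hi
      have hik : i < t := key i (by omega)
      rw [hlt i hik] at hi
      exact hi
    · intro hi
      have hik : i < t := by
        have : i.val < t.val := by omega
        exact this
      rw [hlt i hik]
      exact hi
  have hb : mon n σ (2 * t.val + 1) < mon n 1 (2 * t.val + 1) := by
    rw [mon_apply, mon_apply]
    have h1 : (Finset.univ.filter
        (fun i : Fin n => (σ i).val + i.val + 1 = 2 * t.val + 1)) = ∅ := by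
      rw [Finset.filter_eq_empty_iff]
      intro i _ hi
      have hik : i < t := key i (by omega)
      rw [hlt i hik] at hi
      have h2 : i = t := Fin.ext (by omega)
      rw [h2] at hik
      exact absurd hik (lt_irrefl t)
    have h2 : (Finset.univ.filter
        (fun i : Fin n => ((1 : Equiv.Perm (Fin n)) i).val + i.val + 1 = 2 * t.val + 1))
        = {t} := by
      ext i
      rw [Finset.mem_filter]
      simp only [Finset.mem_filter, Finset.mem_univ, true_and, Finset.mem_singleton,
        Equiv.Perm.one_apply]
      constructor
      · intro hi; exact Fin.ext (by omega)
      · intro hi; rw [hi]; omega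
    rw [h1, h2]
    simp
  exact ⟨2 * t.val + 1, ha, hb⟩

lemma mon_one (n : ℕ) :
    mon n 1 = ∑ i ∈ Finset.Icc 1 n, Finsupp.single (2 * i - 1) 1 := by
  rw [mon]
  simp only [Equiv.Perm.one_apply]
  rw [Fin.sum_univ_eq_sum_range (fun i => Finsupp.single (i + i + 1) 1)]
  refine Finset.sum_nbij' (fun i => i + 1) (fun i => i - 1) ?_ ?_ ?_ ?_ ?_ <;>
    intro a ha <;>
    simp only [Finset.mem_range, Finset.mem_Icc] at ha ⊢
  · omega
  · omega
  · omega
  · omega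
  · congr 1
    omega

lemma mon_one_apply_le (n : ℕ) (j : ℕ) : mon n 1 j ≤ 1 := by
  rw [mon_apply]
  apply Finset.card_le_one.mpr
  intro a ha b hb
  rw [Finset.mem_filter] at ha hb
  simp only [Finset.mem_filter, Finset.mem_univ, true_and, Equiv.Perm.one_apply] at ha hb
  exact Fin.ext (by omega)

lemma lead_mul {f g : MvPolynomial ℕ k} {A B : ℕ →₀ ℕ}
    (hfA : coeff A f = 1) (hf : ∀ d, coeff d f ≠ 0 → toLex d ≤ toLex A)
    (hgB : coeff B g = 1) (hg : ∀ d, coeff d g ≠ 0 → toLex d ≤ toLex B) :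
    coeff (A + B) (f * g) = 1 ∧
      ∀ d, coeff d (f * g) ≠ 0 → toLex d ≤ toLex (A + B) := by
  classical
  have hadd : ∀ x y : ℕ →₀ ℕ, toLex (x + y) = toLex x + toLex y := fun _ _ => rfl
  constructor
  · rw [coeff_mul, Finset.sum_eq_single (A, B)]
    · rw [hfA, hgB, one_mul]
    · rintro ⟨a, b⟩ hab hne
      rw [Finset.HasAntidiagonal.mem_antidiagonal] at hab
      simp only at hab ⊢
      by_contra hz
      have hz' : coeff a f ≠ 0 ∧ coeff b g ≠ 0 := by
        constructor <;> (intro h; apply hz; simp [h])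
      have ha := hf a hz'.1
      have hb := hg b hz'.2
      have hsum : toLex a + toLex b = toLex A + toLex B := by
        rw [← hadd, ← hadd, hab]
      have haA : a = A := by
        by_contra hne2
        have h3 : toLex a < toLex A :=
          lt_of_le_of_ne ha (fun h => hne2 (by exact_mod_cast h))
        have h4 := add_lt_add_of_lt_of_le h3 hb
        rw [hsum] at h4
        exact lt_irrefl _ h4
      subst haA
      have hbB : b = B := add_left_cancel hab
      exact hne (by rw [hbB])
    · intro h
      exact absurd (by rw [Finset.HasAntidiagonal.mem_antidiagonal]) h
  · intro d hd
    rw [coeff_mul] at hd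
    obtain ⟨⟨a, b⟩, hab, hz⟩ := Finset.exists_ne_zero_of_sum_ne_zero hd
    rw [Finset.HasAntidiagonal.mem_antidiagonal] at hab
    have hz' : coeff a f ≠ 0 ∧ coeff b g ≠ 0 := by
      constructor <;> (intro h; apply hz; simp [h])
    simp only at hab
    rw [← hab, hadd]
    exact add_le_add (hf a hz'.1) (hg b hz'.2)

lemma lead_pow {f : MvPolynomial ℕ k} {A : ℕ →₀ ℕ}
    (hfA : coeff A f = 1) (hf : ∀ d, coeff d f ≠ 0 → toLex d ≤ toLex A) (m : ℕ) :
    coeff (m • A) (f ^ m) = 1 ∧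
      ∀ d, coeff d (f ^ m) ≠ 0 → toLex d ≤ toLex (m • A) := by
  induction m with
  | zero =>
      simp only [zero_smul, pow_zero]
      constructor
      · simp
      · intro d hd
        rw [coeff_one] at hd
        have : d = 0 := by by_contra h; simp [Ne.symm h] at hd
        rw [this]
  | succ m ih =>
      rw [pow_succ, succ_nsmul]
      exact lead_mul ih.1 ih.2 hfA hf

lemma coeff_zero_of_mem {p : ℕ} {g : MvPolynomial ℕ k} (S : Set ℕ)
    (hg : g ∈ Ideal.span ((fun i => (X i : MvPolynomial ℕ k) ^ p) '' S)) :
    ∀ d : ℕ →₀ ℕ, (∀ i, d i < p) → coeff d g = 0 := by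
  classical
  induction hg using Submodule.span_induction with
  | mem x hx =>
      obtain ⟨i, _, rfl⟩ := hx
      intro d hd
      simp only [X_pow_eq_monomial, coeff_monomial]
      have : Finsupp.single i p ≠ d := by
        intro h
        have h1 := hd i
        rw [← h, Finsupp.single_eq_same] at h1
        omega
      simp [this]
  | zero => intro d _; simp
  | add x y hx hy ihx ihy =>
      intro d hd
      rw [coeff_add, ihx d hd, ihy d hd, add_zero]
  | smul r x hx ihx =>
      intro d hd
      rw [smul_eq_mul, coeff_mul]
      apply Finset.sum_eq_zero
      rintro ⟨a, b⟩ hab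
      rw [Finset.HasAntidiagonal.mem_antidiagonal] at hab
      simp only
      have hb : ∀ i, b i < p := by
        intro i
        have h1 : a i + b i = d i := by rw [← hab]; rfl
        have h2 := hd i
        omega
      rw [ihx b hb, mul_zero]

end Stmt10Aux

/-- With respect to the lexicographic order in which `z₁ > z₂ > ⋯` (an earlier variable is
more significant, larger exponents give larger monomials), the leading monomial of
`perm(Z_n)` is `∏_{i=1}^{n} z_{2i-1}`: this monomial has coefficient `1` and every other
monomial appearing in `perm(Z_n)` is lexicographically smaller.  Consequently
`perm(Z_n)^{p-1} ∉ (z₁^p, …, z_{2n-1}^p)`, which by Fedder's criterion means that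
`k[z₁, …, z_{2n-1}]/(perm(Z_n))` is `F`-pure. -/
theorem stmt10 {k : Type*} [Field k] (p : ℕ) (hp : p.Prime) (hp2 : 2 < p) [CharP k p]
    (n : ℕ) (hn : 1 ≤ n)
    (M : ℕ →₀ ℕ) (hM : M = ∑ i ∈ Finset.Icc 1 n, Finsupp.single (2 * i - 1) 1) :
    (MvPolynomial.coeff M (hankelMatrix k n).permanent = 1 ∧
        ∀ d : ℕ →₀ ℕ, MvPolynomial.coeff d (hankelMatrix k n).permanent ≠ 0 → d ≠ M →
          toLex d < toLex M) ∧
      (hankelMatrix k n).permanent ^ (p - 1) ∉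
        Ideal.span ((fun i => (X i : MvPolynomial ℕ k) ^ p) '' Set.Icc 1 (2 * n - 1)) := by
  classical
  have hM1 : M = Stmt10Aux.mon n 1 := by rw [hM, Stmt10Aux.mon_one]
  -- part 1a
  have part1 : MvPolynomial.coeff M (hankelMatrix k n).permanent = 1 := by
    rw [Stmt10Aux.coeff_perm, Finset.sum_eq_single (1 : Equiv.Perm (Fin n))]
    · rw [if_pos hM1.symm]
    · intro σ _ hσ
      rw [if_neg]
      intro h
      have hlt := Stmt10Aux.mon_lt n σ hσ
      rw [h, hM1] at hlt
      exact lt_irrefl _ hlt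
    · intro h
      exact absurd (Finset.mem_univ _) h
  have part2 : ∀ d : ℕ →₀ ℕ, MvPolynomial.coeff d (hankelMatrix k n).permanent ≠ 0 →
      d ≠ M → toLex d < toLex M := by
    intro d hd hne
    rw [Stmt10Aux.coeff_perm] at hd
    obtain ⟨σ, _, hσ⟩ := Finset.exists_ne_zero_of_sum_ne_zero hd
    have hmon : Stmt10Aux.mon n σ = d := by
      by_contra h
      simp [h] at hσ
    have hσ1 : σ ≠ 1 := by
      intro h
      rw [h, ← hM1] at hmon
      exact hne hmon.symm
    have := Stmt10Aux.mon_lt n σ hσ1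
    rw [hmon, ← hM1] at this
    exact this
  refine ⟨⟨part1, part2⟩, ?_⟩
  intro hmem
  have hle : ∀ d, MvPolynomial.coeff d (hankelMatrix k n).permanent ≠ 0 →
      toLex d ≤ toLex M := by
    intro d hd
    by_cases h : d = M
    · rw [h]
    · exact le_of_lt (part2 d hd h)
  have hpow := Stmt10Aux.lead_pow part1 hle (p - 1)
  have hMle : ∀ j, M j ≤ 1 := fun j => by
    rw [hM1]; exact Stmt10Aux.mon_one_apply_le n j
  have hbound : ∀ j, ((p - 1) • M) j < p := by
    intro j
    rw [Finsupp.smul_apply, smul_eq_mul]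
    have h1 : (p - 1) * M j ≤ (p - 1) * 1 := Nat.mul_le_mul_left _ (hMle j)
    have hp0 : 0 < p := hp.pos
    omega
  have := Stmt10Aux.coeff_zero_of_mem _ hmem ((p - 1) • M) hbound
  rw [hpow.1] at this
  exact one_ne_zero this
end

section
/- Let k be a field of characteristic p > 2 and Y the n×n symmetric matrix of indeterminates (y_{ij} = y_{ji}), n ≥ 2. For 1 ≤ u < v ≤ n, let P_{uv} be the ideal of k[Y] generated by y_{uu}y_{vv} + y_{uv}² and all variables y_{ij} with {i,j} ⊄ {u,v} other than y_{uu}, y_{uv}, y_{vv}. Then for the element f defined as (−1)^{(p−1)/2} ∏_{1≤i≤j≤n} y_{ij}^{p−1} + ∑_{1≤i<j≤n} (∏_{y∉{y_{ii},y_{ij},y_{jj}}} y^{p−1}) [∑_{k=0}^{(p−3)/2} (−1)^k (y_{ii}y_{jj})^{3(p−1)/2−k} y_{ij}^{2k} + ∑_{k=(p+1)/2}^{p−1} (−1)^k (y_{ii}y_{jj})^{3(p−1)/2−k} y_{ij}^{2k}], one has f ∈ (P_{uv}^[p] : P_{uv}) for every pair u < v. -/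
open MvPolynomial

/-- The index set of the variables `y_{ij}`, `1 ≤ i ≤ j ≤ n`, of the symmetric matrix of
indeterminates. -/
abbrev SymIdx (n : ℕ) := {q : Fin n × Fin n // q.1 ≤ q.2}

/-- The index of the variable `y_{ij} = y_{ji}`. -/
def symIdx {n : ℕ} (i j : Fin n) : SymIdx n :=
  if h : i ≤ j then ⟨(i, j), h⟩ else ⟨(j, i), le_of_not_ge h⟩

/-- The entry `y_{ij}` of the symmetric matrix of indeterminates, as an element of the
polynomial ring `k[Y] = k[y_{ij} : 1 ≤ i ≤ j ≤ n]`. -/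
noncomputable def symVar {k : Type*} [Field k] {n : ℕ} (i j : Fin n) :
    MvPolynomial (SymIdx n) k := X (symIdx i j)

open Finset in
lemma key_identity {R : Type*} [CommRing R] [IsDomain R] (p : ℕ) [hp : Fact p.Prime]
    [CharP R p] (s : ℕ) (hps : p = 2 * s + 1) (x y : R) (hD : x + y ≠ 0) :
    ∑ j ∈ Finset.range p, (-1 : R) ^ j * x ^ (3 * s - j) * y ^ j
      = (-1) ^ s * y ^ s * (x + y) ^ (p - 1)
        + (x + y) ^ p * ∑ i ∈ Finset.range s, x ^ i * (-y) ^ (s - 1 - i) := by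
  have hodd : Odd p := ⟨s, by omega⟩
  have hxyp : (x + y) ^ p = x ^ p + y ^ p := add_pow_char ..
  apply mul_right_cancel₀ hD
  have hT : (∑ j ∈ Finset.range p, (-1 : R) ^ j * x ^ (2 * s - j) * y ^ j) * (x + y)
      = x ^ p + y ^ p := by
    have := geom_sum₂_mul x (-y) p
    rw [sub_neg_eq_add, hodd.neg_pow, sub_neg_eq_add] at this
    rw [← this, ← Finset.sum_range_reflect (fun i => x ^ i * (-y) ^ (p - 1 - i)) p]
    congr 1
    apply Finset.sum_congr rfl
    intro j hj
    rw [Finset.mem_range] at hj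
    have h1 : p - 1 - (p - 1 - j) = j := by omega
    have h2 : p - 1 - j = 2 * s - j := by omega
    rw [h1, h2, neg_pow y j]
    ring
  have hh : (∑ i ∈ Finset.range s, x ^ i * (-y) ^ (s - 1 - i)) * (x + y)
      = x ^ s - (-1) ^ s * y ^ s := by
    have h2 := geom_sum₂_mul x (-y) s
    rw [sub_neg_eq_add] at h2
    rw [h2, neg_pow]
  have hL : (∑ j ∈ Finset.range p, (-1 : R) ^ j * x ^ (3 * s - j) * y ^ j)
      = x ^ s * ∑ j ∈ Finset.range p, (-1 : R) ^ j * x ^ (2 * s - j) * y ^ j := by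
    rw [Finset.mul_sum]
    apply Finset.sum_congr rfl
    intro j hj
    rw [Finset.mem_range] at hj
    have : 3 * s - j = s + (2 * s - j) := by omega
    rw [this, pow_add]; ring
  rw [hL, mul_assoc, hT]
  have hpred : (x + y) ^ (p - 1) * (x + y) = (x + y) ^ p := by
    rw [← pow_succ]; congr 1; omega
  rw [add_mul, mul_assoc, hpred, mul_assoc ((x+y)^p), hh, hxyp]
  ring


/-- For `1 ≤ u < v ≤ n`, let `P_{uv}` be the ideal of `k[Y]` generated by
`y_{uu} y_{vv} + y_{uv}²` together with all variables other than `y_{uu}, y_{uv}, y_{vv}`.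
Then the element `f` defined in the statement lies in `(P_{uv}^[p] : P_{uv})` for every
pair `u < v`. -/
theorem stmt18 {k : Type*} [Field k] (p : ℕ) (hp : p.Prime) (hp2 : 2 < p) [CharP k p]
    (n : ℕ) (hn : 2 ≤ n)
    (P : Fin n → Fin n → Set (MvPolynomial (SymIdx n) k))
    (hP : ∀ u v : Fin n, P u v =
      insert (symVar u u * symVar v v + symVar u v ^ 2)
        ((fun q : SymIdx n => (X q : MvPolynomial (SymIdx n) k)) ''
          {q | q ≠ symIdx u u ∧ q ≠ symIdx u v ∧ q ≠ symIdx v v}))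
    (f : MvPolynomial (SymIdx n) k)
    (hf : f = (-1) ^ ((p - 1) / 2) * (∏ q : SymIdx n, X q ^ (p - 1)) +
      ∑ ij ∈ Finset.univ.filter (fun ij : Fin n × Fin n => ij.1 < ij.2),
        (∏ q ∈ Finset.univ.filter (fun q : SymIdx n =>
            q ≠ symIdx ij.1 ij.1 ∧ q ≠ symIdx ij.1 ij.2 ∧ q ≠ symIdx ij.2 ij.2),
          X q ^ (p - 1)) *
        ((∑ j ∈ Finset.range ((p - 3) / 2 + 1),
            (-1) ^ j * (symVar ij.1 ij.1 * symVar ij.2 ij.2) ^ (3 * (p - 1) / 2 - j) *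
              symVar ij.1 ij.2 ^ (2 * j)) +
          ∑ j ∈ Finset.Icc ((p + 1) / 2) (p - 1),
            (-1) ^ j * (symVar ij.1 ij.1 * symVar ij.2 ij.2) ^ (3 * (p - 1) / 2 - j) *
              symVar ij.1 ij.2 ^ (2 * j))) :
    ∀ u v : Fin n, u < v →
      f ∈ Submodule.colon (Ideal.span ((fun h => h ^ p) '' P u v)) (Ideal.span (P u v)) := by
  intro u v huv
  haveI := Fact.mk hp
  obtain ⟨s, hps⟩ : ∃ s, p = 2 * s + 1 := by
    obtain ⟨s, hs⟩ := hp.odd_of_ne_two (by omega)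
    exact ⟨s, hs⟩
  have hs1 : 1 ≤ s := by omega
  simp only [symVar] at hP hf
  set Ip : Ideal (MvPolynomial (SymIdx n) k) := Ideal.span ((fun h => h ^ p) '' P u v) with hIp
  have hsym : ∀ (i j : Fin n) (h : i ≤ j), symIdx i j = ⟨(i, j), h⟩ := by
    intro i j h; simp [symIdx, h]
  have huuE : symIdx u u = ⟨(u, u), le_refl u⟩ := hsym u u (le_refl u)
  have huvE : symIdx u v = ⟨(u, v), le_of_lt huv⟩ := hsym u v (le_of_lt huv)
  have hvvE : symIdx v v = ⟨(v, v), le_refl v⟩ := hsym v v (le_refl v)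
  have hne_uu_uv : symIdx u u ≠ symIdx u v := by
    rw [huuE, huvE]; simp only [ne_eq, Subtype.mk.injEq, Prod.mk.injEq]
    rintro ⟨-, h⟩; exact huv.ne h
  have hne_uu_vv : symIdx u u ≠ symIdx v v := by
    rw [huuE, hvvE]; simp only [ne_eq, Subtype.mk.injEq, Prod.mk.injEq]
    rintro ⟨h, -⟩; exact huv.ne h
  have hne_uv_vv : symIdx u v ≠ symIdx v v := by
    rw [huvE, hvvE]; simp only [ne_eq, Subtype.mk.injEq, Prod.mk.injEq]
    rintro ⟨h, -⟩; exact huv.ne h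
  have hDmem : (X (symIdx u u) * X (symIdx v v) + X (symIdx u v) ^ 2 : MvPolynomial (SymIdx n) k) ∈ P u v := by
    rw [hP]; exact Set.mem_insert _ _
  have hvarmem : ∀ q : SymIdx n, q ≠ symIdx u u → q ≠ symIdx u v → q ≠ symIdx v v →
      (X q : MvPolynomial (SymIdx n) k) ∈ P u v := by
    intro q h1 h2 h3
    rw [hP]; exact Set.mem_insert_iff.mpr (Or.inr ⟨q, ⟨h1, h2, h3⟩, rfl⟩)
  have hpowmem : ∀ g ∈ P u v, (g : MvPolynomial (SymIdx n) k) ^ p ∈ Ip := fun g hg =>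
    Ideal.subset_span ⟨g, hg, rfl⟩
  have hdvdmem : ∀ g ∈ P u v, ∀ z : MvPolynomial (SymIdx n) k, g ^ p ∣ z → z ∈ Ip := by
    rintro g hg z ⟨c, rfl⟩
    exact Ideal.mul_mem_right c _ (hpowmem g hg)
  have hDne : ((X (symIdx u u) * X (symIdx v v) + X (symIdx u v) ^ 2) : MvPolynomial (SymIdx n) k) ≠ 0 := by
    intro h
    have h2 : ((2 : ℕ) : k) ≠ 0 := by
      rw [Ne, CharP.cast_eq_zero_iff k p 2]
      intro hdvd
      exact absurd (Nat.le_of_dvd (by omega) hdvd) (by omega)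
    have hev := congrArg (eval (fun _ => (1 : k))) h
    simp only [map_add, map_mul, map_pow, eval_X, map_zero, one_mul, one_pow] at hev
    rw [show (1 : k) + 1 = ((2 : ℕ) : k) by push_cast; ring] at hev
    exact h2 hev
  have hcolon_of : ∀ g : MvPolynomial (SymIdx n) k, (∀ x ∈ P u v, g * x ∈ Ip) →
      g ∈ Submodule.colon Ip (Ideal.span (P u v)) := by
    intro g hg
    rw [Submodule.mem_colon]
    intro z hz
    induction hz using Submodule.span_induction with
    | mem x hx => simpa [smul_eq_mul] using hg x hx
    | zero => simpa using Submodule.zero_mem Ip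
    | add x y hx hy ihx ihy => rw [smul_add]; exact Submodule.add_mem _ ihx ihy
    | smul a x hx ih =>
        rw [smul_smul, mul_comm, ← smul_smul]
        exact Submodule.smul_mem _ a ih
  have hIp_colon : ∀ z ∈ Ip, z ∈ Submodule.colon Ip (Ideal.span (P u v)) := by
    intro z hz
    exact hcolon_of z (fun x _ => Ideal.mul_mem_right x _ hz)
  have hG_colon : ((-1 : MvPolynomial (SymIdx n) k) ^ s * ((∏ q ∈ Finset.univ.filter (fun q : SymIdx n => q ≠ symIdx u u ∧ q ≠ symIdx u v ∧ q ≠ symIdx v v), (X q : MvPolynomial (SymIdx n) k) ^ (p - 1)) * X (symIdx u v) ^ (p - 1) * (X (symIdx u u) * X (symIdx v v) + X (symIdx u v) ^ 2) ^ (p - 1)))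
      ∈ Submodule.colon Ip (Ideal.span (P u v)) := by
    apply hcolon_of
    intro x hx
    rw [hP] at hx
    rcases Set.mem_insert_iff.mp hx with rfl | ⟨q, ⟨h1, h2, h3⟩, rfl⟩
    · apply hdvdmem _ hDmem
      refine ⟨(-1 : MvPolynomial (SymIdx n) k) ^ s * ((∏ q ∈ Finset.univ.filter (fun q : SymIdx n => q ≠ symIdx u u ∧ q ≠ symIdx u v ∧ q ≠ symIdx v v), (X q : MvPolynomial (SymIdx n) k) ^ (p - 1)) * X (symIdx u v) ^ (p - 1)), ?_⟩
      have hDp : ((X (symIdx u u) * X (symIdx v v) + X (symIdx u v) ^ 2) : MvPolynomial (SymIdx n) k) ^ p = (X (symIdx u u) * X (symIdx v v) + X (symIdx u v) ^ 2) ^ (p - 1) * (X (symIdx u u) * X (symIdx v v) + X (symIdx u v) ^ 2) := by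
        rw [← pow_succ]; congr 1; omega
      rw [hDp]; ring
    · have hq : q ∈ Finset.univ.filter (fun q : SymIdx n =>
          q ≠ symIdx u u ∧ q ≠ symIdx u v ∧ q ≠ symIdx v v) := by
        simp [h1, h2, h3]
      apply hdvdmem _ (hvarmem q h1 h2 h3)
      refine ⟨(-1 : MvPolynomial (SymIdx n) k) ^ s * ((∏ q' ∈ (Finset.univ.filter (fun q' : SymIdx n =>
          q' ≠ symIdx u u ∧ q' ≠ symIdx u v ∧ q' ≠ symIdx v v)).erase q, (X q' : MvPolynomial (SymIdx n) k) ^ (p - 1))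
          * X (symIdx u v) ^ (p - 1) * (X (symIdx u u) * X (symIdx v v) + X (symIdx u v) ^ 2) ^ (p - 1)), ?_⟩
      have hM : (∏ q ∈ Finset.univ.filter (fun q : SymIdx n => q ≠ symIdx u u ∧ q ≠ symIdx u v ∧ q ≠ symIdx v v), (X q : MvPolynomial (SymIdx n) k) ^ (p - 1)) = (X q : MvPolynomial (SymIdx n) k) ^ (p - 1) * ∏ q' ∈ (Finset.univ.filter (fun q' : SymIdx n =>
          q' ≠ symIdx u u ∧ q' ≠ symIdx u v ∧ q' ≠ symIdx v v)).erase q, (X q' : MvPolynomial (SymIdx n) k) ^ (p - 1) :=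
        (Finset.mul_prod_erase _ _ hq).symm
      have hXp : (X q : MvPolynomial (SymIdx n) k) ^ p = X q ^ (p - 1) * X q := by
        rw [← pow_succ]; congr 1; omega
      rw [hM, hXp]; ring
  have hother : ∀ ij : Fin n × Fin n, ij.1 < ij.2 → ij ≠ (u, v) →
      ((∏ q ∈ Finset.univ.filter (fun q : SymIdx n =>
            q ≠ symIdx ij.1 ij.1 ∧ q ≠ symIdx ij.1 ij.2 ∧ q ≠ symIdx ij.2 ij.2),
          (X q : MvPolynomial (SymIdx n) k) ^ (p - 1)) *
        ((∑ t ∈ Finset.range s,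
            (-1) ^ t * (X (symIdx ij.1 ij.1) * X (symIdx ij.2 ij.2)) ^ (3 * s - t) *
              X (symIdx ij.1 ij.2) ^ (2 * t)) +
          ∑ t ∈ Finset.Icc (s + 1) (p - 1),
            (-1) ^ t * (X (symIdx ij.1 ij.1) * X (symIdx ij.2 ij.2)) ^ (3 * s - t) *
              X (symIdx ij.1 ij.2) ^ (2 * t)) : MvPolynomial (SymIdx n) k) ∈ Ip := by
    rintro ⟨i, j⟩ hij hne
    simp only at hij ⊢
    have hne' : ¬(i = u ∧ j = v) := by
      rintro ⟨h1, h2⟩; exact hne (by rw [h1, h2])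
    rw [mul_add]
    apply Submodule.add_mem
    · obtain ⟨w, hw, hwu, hwv⟩ : ∃ w : Fin n, (w = i ∨ w = j) ∧ w ≠ u ∧ w ≠ v := by
        by_cases hiu : i = u
        · refine ⟨j, Or.inr rfl, ?_, ?_⟩
          · intro h; rw [← hiu] at h; exact hij.ne' h
          · intro h; exact hne' ⟨hiu, h⟩
        · by_cases hiv : i = v
          · refine ⟨j, Or.inr rfl, ?_, ?_⟩
            · intro h; rw [h] at hij; rw [hiv] at hij; exact absurd huv (lt_asymm hij)
            · intro h; rw [← hiv] at h; exact hij.ne' h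
          · exact ⟨i, Or.inl rfl, hiu, hiv⟩
      have hwmem : (X (symIdx w w) : MvPolynomial (SymIdx n) k) ∈ P u v := by
        apply hvarmem
        · rw [hsym w w (le_refl w), huuE]
          simp only [ne_eq, Subtype.mk.injEq, Prod.mk.injEq]
          rintro ⟨h1, -⟩; exact hwu h1
        · rw [hsym w w (le_refl w), huvE]
          simp only [ne_eq, Subtype.mk.injEq, Prod.mk.injEq]
          rintro ⟨h1, h2⟩; exact huv.ne (h1.symm.trans h2)
        · rw [hsym w w (le_refl w), hvvE]
          simp only [ne_eq, Subtype.mk.injEq, Prod.mk.injEq]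
          rintro ⟨h1, -⟩; exact hwv h1
      rw [Finset.mul_sum]
      apply Submodule.sum_mem
      intro t ht
      rw [Finset.mem_range] at ht
      apply hdvdmem _ hwmem
      have hdvd1 : (X (symIdx w w) : MvPolynomial (SymIdx n) k) ∣ X (symIdx i i) * X (symIdx j j) := by
        rcases hw with rfl | rfl
        · exact Dvd.intro _ rfl
        · exact Dvd.intro_left _ rfl
      have hple : p ≤ 3 * s - t := by omega
      have h2 : (X (symIdx w w) : MvPolynomial (SymIdx n) k) ^ p
          ∣ (X (symIdx i i) * X (symIdx j j)) ^ (3 * s - t) :=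
        (pow_dvd_pow _ hple).trans (pow_dvd_pow_of_dvd hdvd1 _)
      exact ((h2.mul_left ((-1) ^ t)).mul_right (X (symIdx i j) ^ (2 * t))).mul_left _
    · have hqmem : (X (symIdx i j) : MvPolynomial (SymIdx n) k) ∈ P u v := by
        apply hvarmem
        · rw [hsym i j (le_of_lt hij), huuE]
          simp only [ne_eq, Subtype.mk.injEq, Prod.mk.injEq]
          rintro ⟨h1, h2⟩; exact hij.ne (h1.trans h2.symm)
        · rw [hsym i j (le_of_lt hij), huvE]
          simp only [ne_eq, Subtype.mk.injEq, Prod.mk.injEq]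
          rintro ⟨h1, h2⟩; exact hne' ⟨h1, h2⟩
        · rw [hsym i j (le_of_lt hij), hvvE]
          simp only [ne_eq, Subtype.mk.injEq, Prod.mk.injEq]
          rintro ⟨h1, h2⟩; exact hij.ne (h1.trans h2.symm)
      rw [Finset.mul_sum]
      apply Submodule.sum_mem
      intro t ht
      rw [Finset.mem_Icc] at ht
      apply hdvdmem _ hqmem
      have hple : p ≤ 2 * t := by omega
      have h2 : (X (symIdx i j) : MvPolynomial (SymIdx n) k) ^ p ∣ X (symIdx i j) ^ (2 * t) :=
        pow_dvd_pow _ hple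
      exact (h2.mul_left ((-1) ^ t * (X (symIdx i i) * X (symIdx j j)) ^ (3 * s - t))).mul_left _
  have e12 : (p - 1) / 2 = s := by omega
  have e3s : 3 * (p - 1) / 2 = 3 * s := by omega
  have eS1 : (p - 3) / 2 + 1 = s := by omega
  have eS2 : (p + 1) / 2 = s + 1 := by omega
  have hMall : (∏ q : SymIdx n, (X q : MvPolynomial (SymIdx n) k) ^ (p - 1))
      = (∏ q ∈ Finset.univ.filter (fun q : SymIdx n => q ≠ symIdx u u ∧ q ≠ symIdx u v ∧ q ≠ symIdx v v), (X q : MvPolynomial (SymIdx n) k) ^ (p - 1)) * (X (symIdx u u) ^ (p - 1) * (X (symIdx u v) ^ (p - 1) * X (symIdx v v) ^ (p - 1))) := by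
    rw [← Finset.prod_filter_mul_prod_filter_not Finset.univ
      (fun q : SymIdx n => q ≠ symIdx u u ∧ q ≠ symIdx u v ∧ q ≠ symIdx v v)]
    congr 1
    have hset : Finset.univ.filter (fun q : SymIdx n =>
        ¬(q ≠ symIdx u u ∧ q ≠ symIdx u v ∧ q ≠ symIdx v v))
        = {symIdx u u, symIdx u v, symIdx v v} := by
      ext q
      simp only [Finset.mem_filter, Finset.mem_univ, true_and, Finset.mem_insert,
        Finset.mem_singleton, ne_eq, not_and_or, not_not]
      try tauto
    rw [hset]
    rw [Finset.prod_insert (by simp [hne_uu_uv, hne_uu_vv]),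
      Finset.prod_insert (by simp [hne_uv_vv]), Finset.prod_singleton]
  have hmain : (-1 : MvPolynomial (SymIdx n) k) ^ s * (∏ q : SymIdx n, (X q : MvPolynomial (SymIdx n) k) ^ (p - 1))
      = (∏ q ∈ Finset.univ.filter (fun q : SymIdx n => q ≠ symIdx u u ∧ q ≠ symIdx u v ∧ q ≠ symIdx v v), (X q : MvPolynomial (SymIdx n) k) ^ (p - 1)) * ((-1 : MvPolynomial (SymIdx n) k) ^ s * (X (symIdx u u) * X (symIdx v v)) ^ (3 * s - s) * X (symIdx u v) ^ (2 * s)) := by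
    rw [hMall, show 3 * s - s = p - 1 from by omega, show 2 * s = p - 1 from by omega, mul_pow]
    try ring
  have hDne' : (X (symIdx u u) * X (symIdx v v) : MvPolynomial (SymIdx n) k) + X (symIdx u v) ^ 2 ≠ 0 := hDne
  have hkey := key_identity p s hps (X (symIdx u u) * X (symIdx v v) : MvPolynomial (SymIdx n) k) (X (symIdx u v) ^ 2) hDne'
  have hsum : (∑ t ∈ Finset.range s, (-1 : MvPolynomial (SymIdx n) k) ^ t * (X (symIdx u u) * X (symIdx v v)) ^ (3 * s - t) * X (symIdx u v) ^ (2 * t)) + (∑ t ∈ Finset.Icc (s + 1) (p - 1), (-1 : MvPolynomial (SymIdx n) k) ^ t * (X (symIdx u u) * X (symIdx v v)) ^ (3 * s - t) * X (symIdx u v) ^ (2 * t)) = (-1 : MvPolynomial (SymIdx n) k) ^ s * X (symIdx u v) ^ (p - 1) * (X (symIdx u u) * X (symIdx v v) + X (symIdx u v) ^ 2) ^ (p - 1)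
      + (X (symIdx u u) * X (symIdx v v) + X (symIdx u v) ^ 2) ^ p * (∑ i ∈ Finset.range s, (X (symIdx u u) * X (symIdx v v)) ^ i * (-(X (symIdx u v) ^ 2)) ^ (s - 1 - i)) - ((-1 : MvPolynomial (SymIdx n) k) ^ s * (X (symIdx u u) * X (symIdx v v)) ^ (3 * s - s) * X (symIdx u v) ^ (2 * s)) := by
    have h0 : ((∑ t ∈ Finset.range s, (-1 : MvPolynomial (SymIdx n) k) ^ t * (X (symIdx u u) * X (symIdx v v)) ^ (3 * s - t) * X (symIdx u v) ^ (2 * t)) + ((-1 : MvPolynomial (SymIdx n) k) ^ s * (X (symIdx u u) * X (symIdx v v)) ^ (3 * s - s) * X (symIdx u v) ^ (2 * s))) + (∑ t ∈ Finset.Icc (s + 1) (p - 1), (-1 : MvPolynomial (SymIdx n) k) ^ t * (X (symIdx u u) * X (symIdx v v)) ^ (3 * s - t) * X (symIdx u v) ^ (2 * t))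
        = ∑ t ∈ Finset.range p, (-1 : MvPolynomial (SymIdx n) k) ^ t * (X (symIdx u u) * X (symIdx v v)) ^ (3 * s - t) * X (symIdx u v) ^ (2 * t) := by
      rw [← Finset.sum_range_succ (fun t => (-1 : MvPolynomial (SymIdx n) k) ^ t * (X (symIdx u u) * X (symIdx v v)) ^ (3 * s - t) * X (symIdx u v) ^ (2 * t)) s]
      have h1 : Finset.Icc (s + 1) (p - 1) = Finset.Ico (s + 1) p := by
        rw [← Finset.Ico_add_one_right_eq_Icc]; congr 1; omega
      rw [h1]
      exact Finset.sum_range_add_sum_Ico _ (by omega)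
    have h1 : (∑ t ∈ Finset.range p, (-1 : MvPolynomial (SymIdx n) k) ^ t * (X (symIdx u u) * X (symIdx v v)) ^ (3 * s - t) * X (symIdx u v) ^ (2 * t))
        = ∑ t ∈ Finset.range p, (-1 : MvPolynomial (SymIdx n) k) ^ t * (X (symIdx u u) * X (symIdx v v)) ^ (3 * s - t) * (X (symIdx u v) ^ 2) ^ t :=
      Finset.sum_congr rfl (fun t _ => by rw [← pow_mul])
    rw [h1, hkey] at h0
    have h2 : ((X (symIdx u v) : MvPolynomial (SymIdx n) k) ^ 2) ^ s = X (symIdx u v) ^ (p - 1) := by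
      rw [← pow_mul]; congr 1; omega
    rw [h2] at h0
    linear_combination h0
  have hfdec : ∃ r ∈ Ip,
      f = (-1 : MvPolynomial (SymIdx n) k) ^ s * ((∏ q ∈ Finset.univ.filter (fun q : SymIdx n => q ≠ symIdx u u ∧ q ≠ symIdx u v ∧ q ≠ symIdx v v), (X q : MvPolynomial (SymIdx n) k) ^ (p - 1)) * X (symIdx u v) ^ (p - 1) * (X (symIdx u u) * X (symIdx v v) + X (symIdx u v) ^ 2) ^ (p - 1)) + r := by
    rw [hf, e12, e3s, eS1, eS2]
    have huvT : (u, v) ∈ Finset.univ.filter (fun ij : Fin n × Fin n => ij.1 < ij.2) := by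
      simp [huv]
    rw [← Finset.add_sum_erase _ _ huvT]
    refine ⟨(∏ q ∈ Finset.univ.filter (fun q : SymIdx n => q ≠ symIdx u u ∧ q ≠ symIdx u v ∧ q ≠ symIdx v v), (X q : MvPolynomial (SymIdx n) k) ^ (p - 1)) * ((X (symIdx u u) * X (symIdx v v) + X (symIdx u v) ^ 2) ^ p * (∑ i ∈ Finset.range s, (X (symIdx u u) * X (symIdx v v)) ^ i * (-(X (symIdx u v) ^ 2)) ^ (s - 1 - i))) + (∑ ij ∈ (Finset.univ.filter (fun ij : Fin n × Fin n => ij.1 < ij.2)).erase (u, v), (∏ q ∈ Finset.univ.filter (fun q : SymIdx n => q ≠ symIdx ij.1 ij.1 ∧ q ≠ symIdx ij.1 ij.2 ∧ q ≠ symIdx ij.2 ij.2), (X q : MvPolynomial (SymIdx n) k) ^ (p - 1)) * ((∑ t ∈ Finset.range s, (-1) ^ t * (X (symIdx ij.1 ij.1) * X (symIdx ij.2 ij.2)) ^ (3 * s - t) * X (symIdx ij.1 ij.2) ^ (2 * t)) + ∑ t ∈ Finset.Icc (s + 1) (p - 1), (-1) ^ t * (X (symIdx ij.1 ij.1) * X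 (symIdx ij.2 ij.2)) ^ (3 * s - t) * X (symIdx ij.1 ij.2) ^ (2 * t))), ?_, ?_⟩
    · apply Submodule.add_mem
      · exact hdvdmem _ hDmem _ ⟨(∏ q ∈ Finset.univ.filter (fun q : SymIdx n => q ≠ symIdx u u ∧ q ≠ symIdx u v ∧ q ≠ symIdx v v), (X q : MvPolynomial (SymIdx n) k) ^ (p - 1)) * (∑ i ∈ Finset.range s, (X (symIdx u u) * X (symIdx v v)) ^ i * (-(X (symIdx u v) ^ 2)) ^ (s - 1 - i)), by ring⟩
      · apply Submodule.sum_mem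
        intro ij hij
        rw [Finset.mem_erase, Finset.mem_filter] at hij
        exact hother ij hij.2.2 hij.1
    · linear_combination hmain + (∏ q ∈ Finset.univ.filter (fun q : SymIdx n => q ≠ symIdx u u ∧ q ≠ symIdx u v ∧ q ≠ symIdx v v), (X q : MvPolynomial (SymIdx n) k) ^ (p - 1)) * hsum
  obtain ⟨r, hr, hfr⟩ := hfdec
  rw [hfr]
  exact Submodule.add_mem _ hG_colon (hIp_colon r hr)
end
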